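/- Assume 0 ≤ c ≤ min P and let prices p^1, …, p^T be drawn independently with p^t ∼ π^t. For all p, q ∈ P and every ε > 0, Pr[ |R̃^T_{p,q}(c) − R̄^T_{p,q}(c)| ≥ ε ] ≤ 2·exp( −ε² / (2 Σ_{t=1}^T d_t²) ), where d_t = (1/T)·(1/min_{p′∈C^t} π^t(p′) + 1)·p̄. -/

import Mathlib

open Finset

def IsPMF (P : Finset ℝ) (f : ℝ → ℝ) : Prop :=
  (∀ p, 0 ≤ f p) ∧ (∑ p ∈ P, f p = 1) ∧ ∀ p, p ∉ P → f p = 0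

noncomputable def suppF (P : Finset ℝ) (f : ℝ → ℝ) : Finset ℝ :=
  P.filter fun p => 0 < f p

def IsAllocSeq (P : Finset ℝ) {T : ℕ} (x : Fin T → ℝ → ℝ) : Prop :=
  ∀ t : Fin T, (∀ p ∈ P, x t p ∈ Set.Icc (0:ℝ) 1) ∧
    ∀ p ∈ P, ∀ q ∈ P, p ≤ q → x t q ≤ x t p

noncomputable def regret (P : Finset ℝ) (hP : P.Nonempty) {T : ℕ}
    (π x : Fin T → ℝ → ℝ) (c : ℝ) : ℝ :=
  haveI : Nonempty {p : ℝ // p ∈ P} := Finset.nonempty_coe_sort.mpr hP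
  Finset.univ.sup' Finset.univ_nonempty
    fun σ : {p : ℝ // p ∈ P} → {p : ℝ // p ∈ P} =>
      (T : ℝ)⁻¹ * ∑ t : Fin T, ∑ p ∈ P.attach,
        π t p.1 * (((σ p).1 - c) * x t (σ p).1 - (p.1 - c) * x t p.1)

noncomputable def pessA (P : Finset ℝ) {T : ℕ} (π x : Fin T → ℝ → ℝ)
    (t : Fin T) (p : ℝ) : ℝ :=
  if p ∈ suppF P (π t) then x t p
  else if h : ((suppF P (π t)).filter fun r => r ≤ p).Nonempty then
    x t (((suppF P (π t)).filter fun r => r ≤ p).max' h)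
  else 1

noncomputable def xhatF (P : Finset ℝ) {T : ℕ} (π x : Fin T → ℝ → ℝ)
    (t : Fin T) (s : ℝ) (p : ℝ) : ℝ :=
  if p ∈ suppF P (π t) then (if p = s then x t s / π t s else 0)
  else if h : ((suppF P (π t)).filter fun r => r ≤ p).Nonempty then
    (if ((suppF P (π t)).filter fun r => r ≤ p).max' h = s then x t s / π t s else 0)
  else 1

open Classical in
noncomputable def probM (P : Finset ℝ) {T : ℕ} (π : Fin T → ℝ → ℝ)
    (E : (Fin T → ℝ) → Prop) : ℝ :=
  ∑ ps ∈ Fintype.piFinset (fun _ : Fin T => P),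
    if E ps then ∏ t, π t (ps t) else 0

noncomputable def Rtilpq (P : Finset ℝ) {T : ℕ} (π x : Fin T → ℝ → ℝ)
    (c p q : ℝ) (ps : Fin T → ℝ) : ℝ :=
  (T : ℝ)⁻¹ * ∑ t : Fin T, π t p *
    ((q - c) * xhatF P π x t (ps t) q - (p - c) * xhatF P π x t (ps t) p)

noncomputable def Rbarpq (P : Finset ℝ) {T : ℕ} (π x : Fin T → ℝ → ℝ)
    (c p q : ℝ) : ℝ :=
  (T : ℝ)⁻¹ * ∑ t : Fin T, π t p *
    ((q - c) * pessA P π x t q - (p - c) * pessA P π x t p)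


section AuxConcentration

open Finset

lemma hoeffding_step (P : Finset ℝ) (w X : ℝ → ℝ) (hw : ∀ s ∈ P, 0 ≤ w s)
    (hw1 : ∑ s ∈ P, w s = 1) (d l : ℝ) (hd : 0 < d)
    (hmean : ∑ s ∈ P, w s * X s = 0) (hbd : ∀ s ∈ P, |X s| ≤ d) :
    ∑ s ∈ P, w s * Real.exp (l * X s) ≤ Real.exp (l ^ 2 * d ^ 2 / 2) := by
  have key : ∑ s ∈ P, w s * Real.exp (l * X s)
      ≤ ∑ s ∈ P, ((w s * d - w s * X s) * (Real.exp (-(l * d)) / (2 * d))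
          + (w s * d + w s * X s) * (Real.exp (l * d) / (2 * d))) := by
    apply Finset.sum_le_sum
    intro s hs
    have habs := hbd s hs
    have h1 : -d ≤ X s := (abs_le.mp habs).1
    have h2 : X s ≤ d := (abs_le.mp habs).2
    have ha : (0:ℝ) ≤ (d - X s) / (2 * d) := div_nonneg (by linarith) (by linarith)
    have hb : (0:ℝ) ≤ (d + X s) / (2 * d) := div_nonneg (by linarith) (by linarith)
    have hab : (d - X s) / (2 * d) + (d + X s) / (2 * d) = 1 := by
      field_simp; ring
    have hconv := convexOn_exp.2 (Set.mem_univ (-(l * d))) (Set.mem_univ (l * d)) ha hb hab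
    simp only [smul_eq_mul] at hconv
    have heq : (d - X s) / (2 * d) * -(l * d) + (d + X s) / (2 * d) * (l * d) = l * X s := by
      field_simp; ring
    rw [heq] at hconv
    have := mul_le_mul_of_nonneg_left hconv (hw s hs)
    calc w s * Real.exp (l * X s) ≤ w s * ((d - X s) / (2 * d) * Real.exp (-(l * d))
          + (d + X s) / (2 * d) * Real.exp (l * d)) := this
      _ = (w s * d - w s * X s) * (Real.exp (-(l * d)) / (2 * d))
          + (w s * d + w s * X s) * (Real.exp (l * d) / (2 * d)) := by
        field_simp
  have hsum : ∑ s ∈ P, ((w s * d - w s * X s) * (Real.exp (-(l * d)) / (2 * d))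
          + (w s * d + w s * X s) * (Real.exp (l * d) / (2 * d)))
      = Real.cosh (l * d) := by
    rw [Finset.sum_add_distrib, ← Finset.sum_mul, ← Finset.sum_mul,
      Finset.sum_sub_distrib, Finset.sum_add_distrib, ← Finset.sum_mul, hmean, hw1,
      Real.cosh_eq]
    field_simp
    ring
  calc ∑ s ∈ P, w s * Real.exp (l * X s) ≤ Real.cosh (l * d) := by rw [← hsum]; exact key
    _ ≤ Real.exp ((l * d) ^ 2 / 2) := Real.cosh_le_exp_half_sq _
    _ = Real.exp (l ^ 2 * d ^ 2 / 2) := by rw [mul_pow]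

lemma probM_mono (P : Finset ℝ) {T : ℕ} (π : Fin T → ℝ → ℝ)
    (hpmf : ∀ t, IsPMF P (π t)) (E E' : (Fin T → ℝ) → Prop)
    (h : ∀ ps, E ps → E' ps) : probM P π E ≤ probM P π E' := by
  classical
  unfold probM
  apply Finset.sum_le_sum
  intro ps _
  have h0 : (0:ℝ) ≤ ∏ t, π t (ps t) := Finset.prod_nonneg fun t _ => (hpmf t).1 _
  split_ifs with h1 h2
  · exact le_refl _
  · exact absurd (h ps h1) h2
  · exact h0
  · exact le_refl _

lemma probM_union (P : Finset ℝ) {T : ℕ} (π : Fin T → ℝ → ℝ)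
    (hpmf : ∀ t, IsPMF P (π t)) (E E' : (Fin T → ℝ) → Prop) :
    probM P π (fun ps => E ps ∨ E' ps) ≤ probM P π E + probM P π E' := by
  classical
  unfold probM
  rw [← Finset.sum_add_distrib]
  apply Finset.sum_le_sum
  intro ps _
  have h0 : (0:ℝ) ≤ ∏ t, π t (ps t) := Finset.prod_nonneg fun t _ => (hpmf t).1 _
  split_ifs <;> simp_all

lemma chernoff (P : Finset ℝ) {T : ℕ} (hT : 0 < T) (π : Fin T → ℝ → ℝ)
    (hpmf : ∀ t, IsPMF P (π t)) (X : Fin T → ℝ → ℝ) (d : Fin T → ℝ)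
    (hd : ∀ t, 0 < d t)
    (hmean : ∀ t, ∑ s ∈ P, π t s * X t s = 0)
    (hbd : ∀ t, ∀ s ∈ P, |X t s| ≤ d t) (ε : ℝ) (hε : 0 < ε) :
    probM P π (fun ps => ε ≤ ∑ t, X t (ps t)) ≤
      Real.exp (-(ε ^ 2) / (2 * ∑ t, d t ^ 2)) := by
  classical
  set V := ∑ t, d t ^ 2 with hVdef
  have hV : 0 < V := Finset.sum_pos (fun t _ => pow_pos (hd t) 2)
    (Finset.univ_nonempty_iff.mpr (Fin.pos_iff_nonempty.mp hT))
  set l := ε / V with hl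
  have hl0 : 0 < l := div_pos hε hV
  have step1 : probM P π (fun ps => ε ≤ ∑ t, X t (ps t))
      ≤ ∑ ps ∈ Fintype.piFinset (fun _ : Fin T => P),
          (∏ t, (π t (ps t) * Real.exp (l * X t (ps t)))) * Real.exp (-(l * ε)) := by
    unfold probM
    apply Finset.sum_le_sum
    intro ps _
    have h0 : (0:ℝ) ≤ ∏ t, π t (ps t) := Finset.prod_nonneg fun t _ => (hpmf t).1 _
    have hprod : ∏ t, (π t (ps t) * Real.exp (l * X t (ps t)))
        = (∏ t, π t (ps t)) * Real.exp (l * ∑ t, X t (ps t)) := by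
      rw [Finset.prod_mul_distrib, ← Real.exp_sum, Finset.mul_sum]
    split_ifs with h
    · rw [hprod, mul_assoc, ← Real.exp_add]
      have h1 : (1:ℝ) ≤ Real.exp (l * ∑ t, X t (ps t) + -(l * ε)) := by
        rw [← Real.exp_zero]
        apply Real.exp_le_exp.mpr
        nlinarith [mul_le_mul_of_nonneg_left h hl0.le]
      exact le_mul_of_one_le_right h0 h1
    · have : (0:ℝ) ≤ ∏ t, (π t (ps t) * Real.exp (l * X t (ps t))) :=
        Finset.prod_nonneg fun t _ => mul_nonneg ((hpmf t).1 _) (Real.exp_nonneg _)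
      exact mul_nonneg this (Real.exp_nonneg _)
  have step2 : ∑ ps ∈ Fintype.piFinset (fun _ : Fin T => P),
          (∏ t, (π t (ps t) * Real.exp (l * X t (ps t)))) * Real.exp (-(l * ε))
      = (∏ t, ∑ s ∈ P, π t s * Real.exp (l * X t s)) * Real.exp (-(l * ε)) := by
    rw [← Finset.sum_mul, Finset.prod_univ_sum]
  have step3 : (∏ t, ∑ s ∈ P, π t s * Real.exp (l * X t s))
      ≤ ∏ t : Fin T, Real.exp (l ^ 2 * d t ^ 2 / 2) := by
    apply Finset.prod_le_prod
    · intro t _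
      exact Finset.sum_nonneg fun s _ => mul_nonneg ((hpmf t).1 _) (Real.exp_nonneg _)
    · intro t _
      exact hoeffding_step P (π t) (X t) (fun s _ => (hpmf t).1 s) (hpmf t).2.1
        (d t) l (hd t) (hmean t) (hbd t)
  have step4 : (∏ t : Fin T, Real.exp (l ^ 2 * d t ^ 2 / 2)) * Real.exp (-(l * ε))
      = Real.exp (-(ε ^ 2) / (2 * V)) := by
    rw [← Real.exp_sum, ← Real.exp_add]
    congr 1
    have : ∑ t : Fin T, l ^ 2 * d t ^ 2 / 2 = l ^ 2 * V / 2 := by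
      rw [hVdef, Finset.mul_sum, Finset.sum_div]
    rw [this, hl]
    field_simp
    ring
  calc probM P π (fun ps => ε ≤ ∑ t, X t (ps t))
      ≤ (∏ t, ∑ s ∈ P, π t s * Real.exp (l * X t s)) * Real.exp (-(l * ε)) := by
        rw [← step2]; exact step1
    _ ≤ (∏ t : Fin T, Real.exp (l ^ 2 * d t ^ 2 / 2)) * Real.exp (-(l * ε)) :=
        mul_le_mul_of_nonneg_right step3 (Real.exp_nonneg _)
    _ = Real.exp (-(ε ^ 2) / (2 * V)) := step4

lemma unbiased (P : Finset ℝ) {T : ℕ} (π x : Fin T → ℝ → ℝ) (t : Fin T)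
    (hpmf : ∀ t, IsPMF P (π t)) (r : ℝ) (hr : r ∈ P) :
    ∑ s ∈ P, π t s * xhatF P π x t s r = pessA P π x t r := by
  classical
  unfold xhatF pessA
  by_cases h1 : r ∈ suppF P (π t)
  · simp only [if_pos h1]
    have hπr : 0 < π t r := (Finset.mem_filter.mp h1).2
    have : ∀ s ∈ P, π t s * (if r = s then x t s / π t s else 0)
        = if r = s then π t s * (x t s / π t s) else 0 := by
      intro s _; split_ifs <;> simp
    rw [Finset.sum_congr rfl this, Finset.sum_ite_eq P r (fun s => π t s * (x t s / π t s)),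
      if_pos hr]
    field_simp
  · simp only [if_neg h1]
    by_cases h2 : ((suppF P (π t)).filter fun r' => r' ≤ r).Nonempty
    · simp only [dif_pos h2]
      set m := ((suppF P (π t)).filter fun r' => r' ≤ r).max' h2 with hm
      have hmsupp : m ∈ suppF P (π t) :=
        (Finset.mem_filter.mp (Finset.max'_mem _ h2)).1
      have hmP : m ∈ P := (Finset.mem_filter.mp hmsupp).1
      have hπm : 0 < π t m := (Finset.mem_filter.mp hmsupp).2
      have : ∀ s ∈ P, π t s * (if m = s then x t s / π t s else 0)
          = if m = s then π t s * (x t s / π t s) else 0 := by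
        intro s _; split_ifs <;> simp
      rw [Finset.sum_congr rfl this, Finset.sum_ite_eq P m (fun s => π t s * (x t s / π t s)),
        if_pos hmP]
      field_simp
    · simp only [dif_neg h2]
      simp only [mul_one]
      exact (hpmf t).2.1

lemma xhat_mem (P : Finset ℝ) {T : ℕ} (π x : Fin T → ℝ → ℝ) (t : Fin T)
    (hpmf : ∀ t, IsPMF P (π t)) (hsupp : (suppF P (π t)).Nonempty)
    (hx : IsAllocSeq P x) (s r : ℝ) :
    0 ≤ xhatF P π x t s r ∧
      xhatF P π x t s r ≤ 1 / ((suppF P (π t)).inf' hsupp (π t)) := by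
  classical
  set m := (suppF P (π t)).inf' hsupp (π t) with hmdef
  obtain ⟨b, hb, hbeq⟩ := Finset.exists_mem_eq_inf' hsupp (π t)
  have hbP : b ∈ P := (Finset.mem_filter.mp hb).1
  rw [← hmdef] at hbeq
  have hm0 : 0 < m := by rw [hbeq]; exact (Finset.mem_filter.mp hb).2
  have hm1 : m ≤ 1 := by
    rw [hbeq]
    calc π t b ≤ ∑ s ∈ P, π t s :=
          Finset.single_le_sum (fun s _ => (hpmf t).1 s) hbP
      _ = 1 := (hpmf t).2.1
  have key : ∀ u, u ∈ suppF P (π t) →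
      0 ≤ x t u / π t u ∧ x t u / π t u ≤ 1 / m := by
    intro u hu
    have huP : u ∈ P := (Finset.mem_filter.mp hu).1
    have hπu : 0 < π t u := (Finset.mem_filter.mp hu).2
    have hxu := (hx t).1 u huP
    have hmu : m ≤ π t u := Finset.inf'_le (π t) hu
    constructor
    · exact div_nonneg hxu.1 hπu.le
    · exact div_le_div₀ zero_le_one hxu.2 hm0 hmu
  unfold xhatF
  split_ifs with h1 h2 h3 h4
  · subst h2
    exact key _ h1
  · exact ⟨le_refl _, by positivity⟩
  · have hmsupp : _ ∈ suppF P (π t) :=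
      (Finset.mem_filter.mp (Finset.max'_mem _ h3)).1
    subst h4
    exact key _ hmsupp
  · exact ⟨le_refl _, by positivity⟩
  · exact ⟨zero_le_one, by
      rw [le_div_iff₀ hm0, one_mul]; exact hm1⟩

lemma pess_mem (P : Finset ℝ) {T : ℕ} (π x : Fin T → ℝ → ℝ) (t : Fin T)
    (hx : IsAllocSeq P x) (r : ℝ) :
    0 ≤ pessA P π x t r ∧ pessA P π x t r ≤ 1 := by
  classical
  unfold pessA
  split_ifs with h1 h2
  · have : r ∈ P := (Finset.mem_filter.mp h1).1
    exact ⟨((hx t).1 r this).1, ((hx t).1 r this).2⟩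
  · have hmem := Finset.max'_mem _ h2
    have : _ ∈ P := (Finset.mem_filter.mp ((Finset.mem_filter.mp hmem).1)).1
    exact ⟨((hx t).1 _ this).1, ((hx t).1 _ this).2⟩
  · exact ⟨zero_le_one, le_refl _⟩

end AuxConcentration

set_option maxHeartbeats 2000000 in
/-- Azuma-Hoeffding concentration of the estimated pairwise regret around
the pessimistic pairwise regret. -/
theorem pairwise_regret_concentration
    (P : Finset ℝ) (hP : P.Nonempty) (hpos : ∀ p ∈ P, 0 < p)
    {T : ℕ} (hT : 1 ≤ T) (π : Fin T → ℝ → ℝ)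
    (hpmf : ∀ t, IsPMF P (π t)) (hsupp : ∀ t, (suppF P (π t)).Nonempty)
    (x : Fin T → ℝ → ℝ) (hx : IsAllocSeq P x)
    (c : ℝ) (hc0 : 0 ≤ c) (hc1 : c ≤ P.min' hP) :
    ∀ p ∈ P, ∀ q ∈ P, ∀ ε : ℝ, 0 < ε →
      probM P π (fun ps => ε ≤ |Rtilpq P π x c p q ps - Rbarpq P π x c p q|) ≤
        2 * Real.exp (-(ε ^ 2) / (2 * ∑ t : Fin T,
          ((T : ℝ)⁻¹ * (1 / ((suppF P (π t)).inf' (hsupp t) (π t)) + 1) *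
            P.max' hP) ^ 2)) := by
  classical
  intro p hp q hq ε hε
  have hT0 : 0 < T := hT
  have hTR : (0:ℝ) < (T:ℝ) := by exact_mod_cast hT0
  have hTpos : (0:ℝ) < (T:ℝ)⁻¹ := by positivity
  have hpbarP : P.max' hP ∈ P := P.max'_mem hP
  have hpbar : 0 < P.max' hP := hpos _ hpbarP
  have hm0 : ∀ t : Fin T, 0 < (suppF P (π t)).inf' (hsupp t) (π t) := by
    intro t
    obtain ⟨b, hb, hbeq⟩ := Finset.exists_mem_eq_inf' (hsupp t) (π t)
    rw [hbeq]; exact (Finset.mem_filter.mp hb).2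
  have hπle1 : ∀ (t : Fin T) (r : ℝ), r ∈ P → π t r ≤ 1 := by
    intro t r hr
    calc π t r ≤ ∑ s ∈ P, π t s :=
          Finset.single_le_sum (fun s _ => (hpmf t).1 s) hr
      _ = 1 := (hpmf t).2.1
  have hrc : ∀ r ∈ P, 0 ≤ r - c ∧ r - c ≤ P.max' hP := by
    intro r hr
    have h1 : c ≤ r := le_trans hc1 (P.min'_le r hr)
    have h2 : r ≤ P.max' hP := P.le_max' r hr
    constructor <;> linarith [hc0]
  set X : Fin T → ℝ → ℝ := fun t s =>
    (T:ℝ)⁻¹ * (π t p * ((q - c) * xhatF P π x t s q - (p - c) * xhatF P π x t s p))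
    - (T:ℝ)⁻¹ * (π t p * ((q - c) * pessA P π x t q - (p - c) * pessA P π x t p))
    with hXdef
  have hd : ∀ t : Fin T, 0 < (T:ℝ)⁻¹ * (1 / ((suppF P (π t)).inf' (hsupp t) (π t)) + 1) * P.max' hP := by
    intro t
    have := hm0 t
    positivity
  have hdecomp : ∀ ps : Fin T → ℝ,
      Rtilpq P π x c p q ps - Rbarpq P π x c p q = ∑ t, X t (ps t) := by
    intro ps
    simp only [hXdef]
    unfold Rtilpq Rbarpq
    rw [Finset.mul_sum, Finset.mul_sum, ← Finset.sum_sub_distrib]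
  have hmean : ∀ t : Fin T, ∑ s ∈ P, π t s * X t s = 0 := by
    intro t
    have e1 : ∀ s ∈ P, π t s * X t s =
          ((T:ℝ)⁻¹ * π t p * (q - c)) * (π t s * xhatF P π x t s q)
        - ((T:ℝ)⁻¹ * π t p * (p - c)) * (π t s * xhatF P π x t s p)
        - π t s * ((T:ℝ)⁻¹ * (π t p * ((q - c) * pessA P π x t q - (p - c) * pessA P π x t p))) := by
      intro s _; simp only [hXdef]; ring
    rw [Finset.sum_congr rfl e1, Finset.sum_sub_distrib, Finset.sum_sub_distrib,
      ← Finset.mul_sum, ← Finset.mul_sum, unbiased P π x t hpmf q hq,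
      unbiased P π x t hpmf p hp, ← Finset.sum_mul, (hpmf t).2.1]
    ring
  have hbd : ∀ (t : Fin T), ∀ s ∈ P, |X t s| ≤
      (T:ℝ)⁻¹ * (1 / ((suppF P (π t)).inf' (hsupp t) (π t)) + 1) * P.max' hP := by
    intro t s _
    set m := (suppF P (π t)).inf' (hsupp t) (π t) with hmdef
    have hm : 0 < m := hm0 t
    obtain ⟨hq0, hq1⟩ := xhat_mem P π x t hpmf (hsupp t) hx s q
    obtain ⟨hp0, hp1⟩ := xhat_mem P π x t hpmf (hsupp t) hx s p
    rw [← hmdef] at hq1 hp1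
    obtain ⟨hQ0, hQ1⟩ := pess_mem P π x t hx q
    obtain ⟨hP0, hP1⟩ := pess_mem P π x t hx p
    have hπp0 : 0 ≤ π t p := (hpmf t).1 p
    have hπp1 : π t p ≤ 1 := hπle1 t p hp
    obtain ⟨hqc0, hqc1⟩ := hrc q hq
    obtain ⟨hpc0, hpc1⟩ := hrc p hp
    have u1a : 0 ≤ π t p * ((q - c) * xhatF P π x t s q) :=
      mul_nonneg hπp0 (mul_nonneg hqc0 hq0)
    have u1b : π t p * ((q - c) * xhatF P π x t s q) ≤ P.max' hP * (1 / m) := by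
      nlinarith [mul_le_mul hqc1 hq1 hq0 hpbar.le, mul_nonneg (sub_nonneg.mpr hπp1) (mul_nonneg hqc0 hq0)]
    have u2a : 0 ≤ π t p * ((p - c) * xhatF P π x t s p) :=
      mul_nonneg hπp0 (mul_nonneg hpc0 hp0)
    have u2b : π t p * ((p - c) * xhatF P π x t s p) ≤ P.max' hP * (1 / m) := by
      nlinarith [mul_le_mul hpc1 hp1 hp0 hpbar.le, mul_nonneg (sub_nonneg.mpr hπp1) (mul_nonneg hpc0 hp0)]
    have u3a : 0 ≤ π t p * ((q - c) * pessA P π x t q) :=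
      mul_nonneg hπp0 (mul_nonneg hqc0 hQ0)
    have u3b : π t p * ((q - c) * pessA P π x t q) ≤ P.max' hP := by
      nlinarith [mul_le_mul hqc1 hQ1 hQ0 hpbar.le, mul_nonneg (sub_nonneg.mpr hπp1) (mul_nonneg hqc0 hQ0)]
    have u4a : 0 ≤ π t p * ((p - c) * pessA P π x t p) :=
      mul_nonneg hπp0 (mul_nonneg hpc0 hP0)
    have u4b : π t p * ((p - c) * pessA P π x t p) ≤ P.max' hP := by
      nlinarith [mul_le_mul hpc1 hP1 hP0 hpbar.le, mul_nonneg (sub_nonneg.mpr hπp1) (mul_nonneg hpc0 hP0)]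
    have hXeq : X t s = (T:ℝ)⁻¹ * (π t p * ((q - c) * xhatF P π x t s q))
        - (T:ℝ)⁻¹ * (π t p * ((p - c) * xhatF P π x t s p))
        - (T:ℝ)⁻¹ * (π t p * ((q - c) * pessA P π x t q))
        + (T:ℝ)⁻¹ * (π t p * ((p - c) * pessA P π x t p)) := by
      simp only [hXdef]; ring
    rw [hXeq, abs_le]
    constructor
    · nlinarith [mul_le_mul_of_nonneg_left u1b hTpos.le,
        mul_le_mul_of_nonneg_left u2b hTpos.le,
        mul_le_mul_of_nonneg_left u3b hTpos.le,
        mul_le_mul_of_nonneg_left u4b hTpos.le,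
        mul_nonneg hTpos.le u1a, mul_nonneg hTpos.le u2a,
        mul_nonneg hTpos.le u3a, mul_nonneg hTpos.le u4a]
    · nlinarith [mul_le_mul_of_nonneg_left u1b hTpos.le,
        mul_le_mul_of_nonneg_left u2b hTpos.le,
        mul_le_mul_of_nonneg_left u3b hTpos.le,
        mul_le_mul_of_nonneg_left u4b hTpos.le,
        mul_nonneg hTpos.le u1a, mul_nonneg hTpos.le u2a,
        mul_nonneg hTpos.le u3a, mul_nonneg hTpos.le u4a]
  have hmeanN : ∀ t : Fin T, ∑ s ∈ P, π t s * (-X t s) = 0 := by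
    intro t
    have : ∀ s ∈ P, π t s * (-X t s) = -(π t s * X t s) := fun s _ => by ring
    rw [Finset.sum_congr rfl this, Finset.sum_neg_distrib, hmean t, neg_zero]
  have hbdN : ∀ (t : Fin T), ∀ s ∈ P, |(-X t s)| ≤
      (T:ℝ)⁻¹ * (1 / ((suppF P (π t)).inf' (hsupp t) (π t)) + 1) * P.max' hP := by
    intro t s hs
    rw [abs_neg]; exact hbd t s hs
  have step1 : probM P π (fun ps => ε ≤ |Rtilpq P π x c p q ps - Rbarpq P π x c p q|)
      ≤ probM P π (fun ps => (ε ≤ ∑ t, X t (ps t)) ∨ (ε ≤ ∑ t, (fun t' s => -X t' s) t (ps t))) := by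
    apply probM_mono P π hpmf
    intro ps hpse
    rcases le_abs.mp hpse with h | h
    · left; rw [← hdecomp ps]; exact h
    · right
      simp only
      rw [Finset.sum_neg_distrib, ← hdecomp ps]
      exact h
  have step2 := probM_union P π hpmf (fun ps => ε ≤ ∑ t, X t (ps t))
    (fun ps => ε ≤ ∑ t, (fun t' s => -X t' s) t (ps t))
  have step3 := chernoff P hT0 π hpmf X
    (fun t => (T:ℝ)⁻¹ * (1 / ((suppF P (π t)).inf' (hsupp t) (π t)) + 1) * P.max' hP)
    hd hmean hbd ε hε
  have step4 := chernoff P hT0 π hpmf (fun t' s => -X t' s)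
    (fun t => (T:ℝ)⁻¹ * (1 / ((suppF P (π t)).inf' (hsupp t) (π t)) + 1) * P.max' hP)
    hd hmeanN hbdN ε hε
  calc probM P π (fun ps => ε ≤ |Rtilpq P π x c p q ps - Rbarpq P π x c p q|)
      ≤ probM P π (fun ps => (ε ≤ ∑ t, X t (ps t)) ∨ (ε ≤ ∑ t, (fun t' s => -X t' s) t (ps t))) := step1
    _ ≤ probM P π (fun ps => ε ≤ ∑ t, X t (ps t))
        + probM P π (fun ps => ε ≤ ∑ t, (fun t' s => -X t' s) t (ps t)) := step2
    _ ≤ Real.exp (-(ε ^ 2) / (2 * ∑ t : Fin T,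
          ((T : ℝ)⁻¹ * (1 / ((suppF P (π t)).inf' (hsupp t) (π t)) + 1) *
            P.max' hP) ^ 2))
        + Real.exp (-(ε ^ 2) / (2 * ∑ t : Fin T,
          ((T : ℝ)⁻¹ * (1 / ((suppF P (π t)).inf' (hsupp t) (π t)) + 1) *
            P.max' hP) ^ 2)) := add_le_add step3 step4
    _ = 2 * Real.exp (-(ε ^ 2) / (2 * ∑ t : Fin T,
          ((T : ℝ)⁻¹ * (1 / ((suppF P (π t)).inf' (hsupp t) (π t)) + 1) *
            P.max' hP) ^ 2)) := (two_mul _).symm
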